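/- Let C ∈ ℝ^{p×n} have full row rank and d ∈ ℝ^p. Set x_C = C†d and ω = 1 + ‖x_C‖₂². Then the Moore–Penrose pseudoinverse of the augmented matrix C̃ = [C d] ∈ ℝ^{p×(n+1)} is given by the block matrix C̃† = [ (I_n - ω⁻¹ x_C x_Cᵀ) C† ; ω⁻¹ x_Cᵀ C† ]. -/

import Mathlib

open Matrix

/-- `X` is the Moore–Penrose pseudoinverse of `C` (the four Penrose conditions). -/
def IsMoorePenrose {p n : Type*} [Fintype p] [Fintype n]
    (C : Matrix p n ℝ) (X : Matrix n p ℝ) : Prop :=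
  C * X * C = C ∧ X * C * X = X ∧ (C * X)ᵀ = C * X ∧ (X * C)ᵀ = X * C

lemma aux_mul_vecMulVec {m n q : Type*} [Fintype n] (M : Matrix m n ℝ) (w : n → ℝ) (v : q → ℝ) :
    M * vecMulVec w v = vecMulVec (M *ᵥ w) v := by
  ext i j
  simp [mul_apply, vecMulVec_apply, mulVec, dotProduct, Finset.sum_mul, mul_assoc]

lemma aux_vecMulVec_mul {m n q : Type*} [Fintype n] (w : m → ℝ) (v : n → ℝ) (M : Matrix n q ℝ) :
    vecMulVec w v * M = vecMulVec w (v ᵥ* M) := by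
  ext i j
  simp [mul_apply, vecMulVec_apply, vecMul, dotProduct, Finset.mul_sum, mul_assoc]

lemma aux_vecMulVec_smul {m n : Type*} (w : m → ℝ) (c : ℝ) (v : n → ℝ) :
    vecMulVec w (c • v) = c • vecMulVec w v := by
  ext i j
  simp [vecMulVec_apply, mul_left_comm, mul_comm]

lemma aux_vecMulVec_transpose {m n : Type*} (w : m → ℝ) (v : n → ℝ) :
    (vecMulVec w v)ᵀ = vecMulVec v w := by
  ext i j
  simp [vecMulVec_apply, mul_comm]

/-- For full-row-rank `C` and `x_C = C†d`, `ω = 1 + ‖x_C‖₂²`, the pseudoinverse of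
`C̃ = [C d]` is the block matrix `[(I - ω⁻¹x_C x_Cᵀ)C† ; ω⁻¹ x_Cᵀ C†]`. -/
theorem pinv_of_augmented (p n : ℕ)
    (C : Matrix (Fin p) (Fin n) ℝ) (hrk : C.rank = p)
    (d : Fin p → ℝ)
    (Cp : Matrix (Fin n) (Fin p) ℝ) (hCp : IsMoorePenrose C Cp)
    (xC : Fin n → ℝ) (hxC : xC = Cp *ᵥ d)
    (ω : ℝ) (hω : ω = 1 + ∑ i, xC i ^ 2) :
    IsMoorePenrose
      (fromCols C (Matrix.of fun i (_ : Unit) => d i))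
      (fromRows ((1 - ω⁻¹ • vecMulVec xC xC) * Cp)
        (Matrix.of fun (_ : Unit) j => ω⁻¹ * ∑ i, xC i * Cp i j)) := by
  classical
  obtain ⟨h1, h2, h3, h4⟩ := hCp
  have hω0 : ω ≠ 0 := by
    have : (0:ℝ) < ω := by rw [hω]; positivity
    exact ne_of_gt this
  -- full row rank gives surjectivity of `C.mulVecLin`
  have hsurj : Function.Surjective C.mulVecLin := by
    rw [← LinearMap.range_eq_top]
    apply Submodule.eq_top_of_finrank_eq
    have : Module.finrank ℝ ↥(LinearMap.range C.mulVecLin) = C.rank := rfl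
    rw [this, hrk]
    simp
  -- hence `C * Cp = 1`
  have hCCp : C * Cp = 1 := by
    have key : ∀ v, (C * Cp) *ᵥ v = v := by
      intro v
      obtain ⟨u, hu⟩ := hsurj v
      rw [Matrix.mulVecLin_apply] at hu
      calc (C * Cp) *ᵥ v = (C * Cp) *ᵥ (C *ᵥ u) := by rw [hu]
        _ = (C * Cp * C) *ᵥ u := by rw [Matrix.mulVec_mulVec]
        _ = C *ᵥ u := by rw [h1]
        _ = v := hu
    apply Matrix.toLin'.injective
    apply LinearMap.ext
    intro v
    simp [Matrix.toLin'_apply, key v]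
  have hCd : C *ᵥ xC = d := by
    rw [hxC, Matrix.mulVec_mulVec, hCCp, Matrix.one_mulVec]
  have hPx : (Cp * C) *ᵥ xC = xC := by
    rw [← Matrix.mulVec_mulVec, hCd, ← hxC]
  have hxP : xC ᵥ* (Cp * C) = xC := by
    rw [← h4, Matrix.vecMul_transpose]
    exact hPx
  -- names for the blocks
  set A : Matrix (Fin n) (Fin p) ℝ := (1 - ω⁻¹ • vecMulVec xC xC) * Cp with hA
  set b : Fin p → ℝ := ω⁻¹ • (xC ᵥ* Cp) with hb
  have hBrow : (Matrix.of fun (_ : Unit) j => ω⁻¹ * ∑ i, xC i * Cp i j)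
      = Matrix.replicateRow Unit b := by
    ext u j
    simp [hb, vecMul, dotProduct]
  have hDcol : (Matrix.of fun i (_ : Unit) => d i) = Matrix.replicateCol Unit d := rfl
  -- C̃ * X̃ = 1
  have hCA : C * A = 1 - ω⁻¹ • vecMulVec d (xC ᵥ* Cp) := by
    rw [hA, ← Matrix.mul_assoc, Matrix.mul_sub, Matrix.mul_one, Matrix.mul_smul,
      aux_mul_vecMulVec, hCd, Matrix.sub_mul, hCCp, Matrix.smul_mul, aux_vecMulVec_mul]
  have hDB : Matrix.replicateCol Unit d * Matrix.replicateRow Unit b = ω⁻¹ • vecMulVec d (xC ᵥ* Cp) := by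
    rw [← vecMulVec_eq Unit, hb, aux_vecMulVec_smul]
  have hCX : fromCols C (Matrix.of fun i (_ : Unit) => d i) *
      fromRows A (Matrix.of fun (_ : Unit) j => ω⁻¹ * ∑ i, xC i * Cp i j) = 1 := by
    rw [hBrow, hDcol, fromCols_mul_fromRows, hCA, hDB, sub_add_cancel]
  -- A *ᵥ d = ω⁻¹ • xC
  have hVx : vecMulVec xC xC *ᵥ xC = (ω - 1) • xC := by
    ext j
    simp only [mulVec, dotProduct, vecMulVec_apply, Pi.smul_apply, smul_eq_mul, hω,
      add_sub_cancel_left, Finset.sum_mul]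
    exact Finset.sum_congr rfl fun i _ => by ring
  have hAd : A *ᵥ d = ω⁻¹ • xC := by
    rw [hA, ← Matrix.mulVec_mulVec, ← hxC, Matrix.sub_mulVec, Matrix.one_mulVec,
      Matrix.smul_mulVec, hVx]
    ext j
    simp only [Pi.sub_apply, Pi.smul_apply, smul_eq_mul]
    field_simp
    ring
  -- b ᵥ* C = ω⁻¹ • xC
  have hbC : b ᵥ* C = ω⁻¹ • xC := by
    rw [hb, Matrix.smul_vecMul, Matrix.vecMul_vecMul, hxP]
  -- block equalities for X̃ * C̃
  have hAC : A * C = Cp * C - ω⁻¹ • vecMulVec xC xC := by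
    rw [hA, Matrix.mul_assoc, Matrix.sub_mul, Matrix.one_mul, Matrix.smul_mul,
      aux_vecMulVec_mul, hxP]
  have hACt : (A * C)ᵀ = A * C := by
    rw [hAC, Matrix.transpose_sub, Matrix.transpose_smul, h4, aux_vecMulVec_transpose]
  have hAD : A * Matrix.replicateCol Unit d = Matrix.replicateCol Unit (ω⁻¹ • xC) := by
    rw [← Matrix.replicateCol_mulVec, hAd]
  have hBC : Matrix.replicateRow Unit b * C = Matrix.replicateRow Unit (ω⁻¹ • xC) := by
    rw [← Matrix.replicateRow_vecMul, hbC]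
  have hBD : (Matrix.replicateRow Unit b * Matrix.replicateCol Unit d)ᵀ =
      Matrix.replicateRow Unit b * Matrix.replicateCol Unit d := by
    ext i j
    obtain rfl : i = j := Subsingleton.elim _ _
    rfl
  refine ⟨?_, ?_, ?_, ?_⟩
  · rw [hCX, Matrix.one_mul]
  · rw [Matrix.mul_assoc, hCX, Matrix.mul_one]
  · rw [hCX, Matrix.transpose_one]
  · rw [hBrow, hDcol, fromRows_mul_fromCols, fromBlocks_transpose]
    rw [hACt, hAD, hBC, hBD, Matrix.transpose_replicateCol, Matrix.transpose_replicateRow]
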